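/- Let [n] be a set of elements and T_1, …, T_m ⊆ [n] a hitting set instance. Let M = 20 and let ε > 0 be sufficiently small. Consider the weighted graph on vertex set {x, z, y, u, h} ∪ {a_1,…,a_n} ∪ {b_1,…,b_m} with edge weights w(x,z) = M, w(x,b_j) = M + 1.4 + jε, w(z,y) = 1.5, w(z,a_i) = 1 + iε, w(z,u) = 2, w(a_i,u) = 1.1, w(a_i,b_j) = 1 + (i+j)ε whenever i ∈ T_j, and w(b_j,h) = 1 + jε, and let d be the induced shortest-path metric. Then for every j, the iBGP safe set satisfies S(x, b_j) = {x, b_j} ∪ {a_i : i ∈ T_j}; consequently, every feasible edge set E (one in which every ordered pair (p,q) has a q–p path all of whose vertices lie in S(p,q)) contains either the edge {x, b_j} or an edge {x, a_i} with i ∈ T_j. -/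
import Mathlib


/-- The vertices of the basic hitting-set gadget: `x`, the dummy nodes `z`, `y`,
`u`, `h`, element nodes `a i` for `i ∈ [n]` and set nodes `b j` for `j ∈ [m]`. -/
inductive GV (n m : ℕ) : Type
  | x : GV n m
  | z : GV n m
  | y : GV n m
  | u : GV n m
  | h : GV n m
  | a : Fin n → GV n m
  | b : Fin m → GV n m
deriving DecidableEq

/-- `d` is a pseudometric (reflexive, symmetric, triangle inequality). -/
def IsPseudoMetric {α : Type*} (d : α → α → ℝ) : Prop :=
  (∀ p, d p p = 0) ∧ (∀ p q, d p q = d q p) ∧ (∀ p q r, d p r ≤ d p q + d q r)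

/-- `d` is bounded above by the prescribed gadget edge weights (element indices
`i ∈ [n]` and set indices `j ∈ [m]` are 1-based, via `i.val + 1`, `j.val + 1`). -/
def GadgetEdgeBounds {n m : ℕ} (T : Fin m → Finset (Fin n)) (ε : ℝ)
    (d : GV n m → GV n m → ℝ) : Prop :=
  d GV.x GV.z ≤ 20 ∧
  (∀ j : Fin m, d GV.x (GV.b j) ≤ 20 + 1.4 + (j.val + 1) * ε) ∧
  d GV.z GV.y ≤ 1.5 ∧
  (∀ i : Fin n, d GV.z (GV.a i) ≤ 1 + (i.val + 1) * ε) ∧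
  d GV.z GV.u ≤ 2 ∧
  (∀ i : Fin n, d (GV.a i) GV.u ≤ 1.1) ∧
  (∀ i : Fin n, ∀ j : Fin m, i ∈ T j →
    d (GV.a i) (GV.b j) ≤ 1 + ((i.val + 1) + (j.val + 1)) * ε) ∧
  (∀ j : Fin m, d (GV.b j) GV.h ≤ 1 + (j.val + 1) * ε)

/-- `d` is the shortest-path metric of the gadget graph: it is the pointwise
greatest pseudometric bounded above by the gadget edge weights. -/
def IsGadgetSPMetric {n m : ℕ} (T : Fin m → Finset (Fin n)) (ε : ℝ)
    (d : GV n m → GV n m → ℝ) : Prop :=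
  IsPseudoMetric d ∧ GadgetEdgeBounds T ε d ∧
  ∀ d' : GV n m → GV n m → ℝ, IsPseudoMetric d' → GadgetEdgeBounds T ε d' →
    ∀ p q, d' p q ≤ d p q

/-- The iBGP safe set of the ordered pair `(p,q)` for the metric `d`:
`S(p,q) = {w | ∀ r ∈ D(p,q), d(w,q) < d(w,r)} ∪ {q}` where
`D(p,q) = {r | d(p,r) > d(p,q)}`. -/
def iBGPSafeSet {α : Type*} (d : α → α → ℝ) (p q : α) : Set α :=
  {w | ∀ r, d p q < d p r → d w q < d w r} ∪ {q}

/-- `E` is a correct iBGP signaling graph: every ordered pair `(p,q)` has a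
path from `q` to `p` all of whose vertices lie in the safe set `S(p,q)`. -/
def iBGPFeasible {α : Type*} (d : α → α → ℝ) (E : Set (Sym2 α)) : Prop :=
  ∀ p q : α, ∃ w : (SimpleGraph.fromEdgeSet E).Walk q p,
    ∀ v ∈ w.support, v ∈ iBGPSafeSet d p q

namespace Stmt5Aux

lemma absPM {α : Type*} (F : α → ℝ) : IsPseudoMetric (fun p q => |F p - F q|) :=
  ⟨fun p => by simp, fun p q => abs_sub_comm _ _, fun p q r => abs_sub_le _ _ _⟩

variable {n m : ℕ}

/-- distances from x -/
def fX (n m : ℕ) (ε : ℝ) : GV n m → ℝ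
  | .x => 0
  | .z => 20
  | .y => 21.5
  | .u => 22
  | .h => 22.4
  | .a i => 21 + ((i.val : ℝ) + 1) * ε
  | .b j => 21.4 + ((j.val : ℝ) + 1) * ε

/-- capped distances from z -/
def gZ (n m : ℕ) (ε : ℝ) : GV n m → ℝ
  | .x => 2
  | .z => 0
  | .y => 1.5
  | .u => 2
  | .h => 2
  | .a i => 1 + ((i.val : ℝ) + 1) * ε
  | .b _ => 2

/-- capped distances from a i₀ -/
def phi (n m : ℕ) (T : Fin m → Finset (Fin n)) (ε : ℝ) (i₀ : Fin n) : GV n m → ℝ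
  | .x => 1.2
  | .z => 1 + ((i₀.val : ℝ) + 1) * ε
  | .y => 1.2
  | .u => 1.1
  | .h => 1.2
  | .a i => if i = i₀ then 0 else 1.2
  | .b j => if i₀ ∈ T j then 1 + (((i₀.val : ℝ) + 1) + ((j.val : ℝ) + 1)) * ε else 1.2

/-- capped distances from b j₀ -/
def psi (n m : ℕ) (T : Fin m → Finset (Fin n)) (ε : ℝ) (j₀ : Fin m) : GV n m → ℝ
  | .x => 1.5
  | .z => 1.5
  | .y => 1.5
  | .u => 1.5
  | .h => 1 + ((j₀.val : ℝ) + 1) * ε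
  | .a i => if i ∈ T j₀ then 1 + (((i.val : ℝ) + 1) + ((j₀.val : ℝ) + 1)) * ε else 1.5
  | .b j => if j = j₀ then 0 else 1.5

variable {T : Fin m → Finset (Fin n)} {ε : ℝ}

lemma fX_bounds (hn : ∀ i : Fin n, 0 ≤ ((i.val : ℝ) + 1) * ε ∧ ((i.val : ℝ) + 1) * ε ≤ 0.01)
    (hm : ∀ j : Fin m, 0 ≤ ((j.val : ℝ) + 1) * ε ∧ ((j.val : ℝ) + 1) * ε ≤ 0.01) :
    GadgetEdgeBounds T ε (fun p q => |fX n m ε p - fX n m ε q|) := by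
  refine ⟨?_, fun j => ?_, ?_, fun i => ?_, ?_, fun i => ?_, fun i j hij => ?_, fun j => ?_⟩ <;>
    simp only [fX] <;> rw [abs_le]
  · norm_num
  · obtain ⟨h1, h2⟩ := hm j; constructor <;> linarith
  · norm_num
  · obtain ⟨h1, h2⟩ := hn i; constructor <;> linarith
  · norm_num
  · obtain ⟨h1, h2⟩ := hn i; constructor <;> linarith
  · obtain ⟨h1, h2⟩ := hn i; obtain ⟨h3, h4⟩ := hm j; constructor <;> linarith
  · obtain ⟨h1, h2⟩ := hm j; constructor <;> linarith

lemma gZ_bounds (hn : ∀ i : Fin n, 0 ≤ ((i.val : ℝ) + 1) * ε ∧ ((i.val : ℝ) + 1) * ε ≤ 0.01)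
    (hm : ∀ j : Fin m, 0 ≤ ((j.val : ℝ) + 1) * ε ∧ ((j.val : ℝ) + 1) * ε ≤ 0.01) :
    GadgetEdgeBounds T ε (fun p q => |gZ n m ε p - gZ n m ε q|) := by
  refine ⟨?_, fun j => ?_, ?_, fun i => ?_, ?_, fun i => ?_, fun i j hij => ?_, fun j => ?_⟩ <;>
    simp only [gZ] <;> rw [abs_le]
  · norm_num
  · obtain ⟨h1, h2⟩ := hm j; constructor <;> linarith
  · norm_num
  · obtain ⟨h1, h2⟩ := hn i; constructor <;> linarith
  · norm_num
  · obtain ⟨h1, h2⟩ := hn i; constructor <;> linarith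
  · obtain ⟨h1, h2⟩ := hn i; obtain ⟨h3, h4⟩ := hm j; constructor <;> linarith
  · obtain ⟨h1, h2⟩ := hm j; constructor <;> linarith

lemma phi_bounds (i₀ : Fin n)
    (hn : ∀ i : Fin n, 0 ≤ ((i.val : ℝ) + 1) * ε ∧ ((i.val : ℝ) + 1) * ε ≤ 0.01)
    (hm : ∀ j : Fin m, 0 ≤ ((j.val : ℝ) + 1) * ε ∧ ((j.val : ℝ) + 1) * ε ≤ 0.01) :
    GadgetEdgeBounds T ε (fun p q => |phi n m T ε i₀ p - phi n m T ε i₀ q|) := by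
  obtain ⟨hi01, hi02⟩ := hn i₀
  refine ⟨?_, fun j => ?_, ?_, fun i => ?_, ?_, fun i => ?_, fun i j hij => ?_, fun j => ?_⟩ <;>
    simp only [phi] <;> rw [abs_le]
  · constructor <;> linarith
  · obtain ⟨h3, h4⟩ := hm j
    split_ifs <;> constructor <;> linarith
  · constructor <;> linarith
  · obtain ⟨h1, h2⟩ := hn i
    split_ifs with hc
    · subst hc; constructor <;> linarith
    · constructor <;> linarith
  · constructor <;> linarith
  · obtain ⟨h1, h2⟩ := hn i
    split_ifs <;> constructor <;> linarith
  · obtain ⟨h1, h2⟩ := hn i; obtain ⟨h3, h4⟩ := hm j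
    split_ifs with hc1 hc2 hc2
    · subst hc1; constructor <;> linarith
    · exact absurd (hc1 ▸ hij) hc2
    · constructor <;> linarith
    · constructor <;> linarith
  · obtain ⟨h3, h4⟩ := hm j
    split_ifs <;> constructor <;> linarith

lemma psi_bounds (j₀ : Fin m)
    (hn : ∀ i : Fin n, 0 ≤ ((i.val : ℝ) + 1) * ε ∧ ((i.val : ℝ) + 1) * ε ≤ 0.01)
    (hm : ∀ j : Fin m, 0 ≤ ((j.val : ℝ) + 1) * ε ∧ ((j.val : ℝ) + 1) * ε ≤ 0.01) :
    GadgetEdgeBounds T ε (fun p q => |psi n m T ε j₀ p - psi n m T ε j₀ q|) := by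
  obtain ⟨hj01, hj02⟩ := hm j₀
  refine ⟨?_, fun j => ?_, ?_, fun i => ?_, ?_, fun i => ?_, fun i j hij => ?_, fun j => ?_⟩ <;>
    simp only [psi] <;> rw [abs_le]
  · norm_num
  · obtain ⟨h3, h4⟩ := hm j
    split_ifs <;> constructor <;> linarith
  · norm_num
  · obtain ⟨h1, h2⟩ := hn i
    split_ifs <;> constructor <;> linarith
  · norm_num
  · obtain ⟨h1, h2⟩ := hn i
    split_ifs <;> constructor <;> linarith
  · obtain ⟨h1, h2⟩ := hn i; obtain ⟨h3, h4⟩ := hm j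
    split_ifs with hc1 hc2 hc2
    · subst hc2; constructor <;> linarith
    · constructor <;> linarith
    · exact absurd (hc2 ▸ hij) hc1
    · constructor <;> linarith
  · obtain ⟨h3, h4⟩ := hm j
    split_ifs with hc
    · subst hc; constructor <;> linarith
    · constructor <;> linarith

lemma exists_adj_last {V : Type*} {G : SimpleGraph V} {q p : V} (w : G.Walk q p) :
    q ≠ p → ∃ v ∈ w.support, G.Adj v p := by
  induction w with
  | nil => intro hne; exact absurd rfl hne
  | @cons a b c hadj w' ih =>
    intro _
    by_cases hbc : b = c
    · subst hbc; exact ⟨a, by simp, hadj⟩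
    · obtain ⟨v, hv, hadj'⟩ := ih hbc
      exact ⟨v, by simp [hv], hadj'⟩

end Stmt5Aux

open Stmt5Aux

/-- In the basic gadget (with sufficiently small `ε > 0` and `d` the induced
shortest-path metric), for every `j` the safe set `S(x, b j)` is exactly
`{x, b j} ∪ {a i : i ∈ T j}`; consequently every feasible edge set contains
either the edge `{x, b j}` or an edge `{x, a i}` with `i ∈ T j`. -/
theorem stmt5 (n m : ℕ) (T : Fin m → Finset (Fin n)) :
    ∃ ε₀ : ℝ, 0 < ε₀ ∧ ∀ ε : ℝ, 0 < ε → ε < ε₀ →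
      ∀ d : GV n m → GV n m → ℝ, IsGadgetSPMetric T ε d →
        ∀ j : Fin m,
          (iBGPSafeSet d GV.x (GV.b j) =
            ({GV.x, GV.b j} : Set (GV n m)) ∪ {w | ∃ i ∈ T j, w = GV.a i}) ∧
          ∀ E : Set (Sym2 (GV n m)), iBGPFeasible d E →
            s(GV.x, GV.b j) ∈ E ∨ ∃ i ∈ T j, s(GV.x, GV.a i) ∈ E := by
  refine ⟨1 / (100 * (n + m + 1)), by positivity, fun ε hε hεlt d hd j => ?_⟩
  obtain ⟨⟨hd0, hdsymm, hdtri⟩, hub, hmax⟩ := hd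
  obtain ⟨hxz, hxb, hzy, hza, hzu, hau, hab, hbh⟩ := hub
  -- small-ε facts
  have hden : (0:ℝ) < 100 * ((n:ℝ) + m + 1) := by positivity
  have h100 : ε * (100 * ((n:ℝ) + m + 1)) < 1 := by
    have := hεlt
    rw [lt_div_iff₀ hden] at this
    exact this
  have hn : ∀ i : Fin n, 0 ≤ ((i.val : ℝ) + 1) * ε ∧ ((i.val : ℝ) + 1) * ε ≤ 0.01 := by
    intro i
    have h1 : ((i.val : ℝ)) < n := by exact_mod_cast i.isLt
    have h2 : (0:ℝ) ≤ m := by positivity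
    constructor
    · positivity
    · nlinarith [mul_le_mul_of_nonneg_right
        (show ((i.val : ℝ) + 1) ≤ (n:ℝ) + m + 1 by linarith) hε.le]
  have hm : ∀ j : Fin m, 0 ≤ ((j.val : ℝ) + 1) * ε ∧ ((j.val : ℝ) + 1) * ε ≤ 0.01 := by
    intro j
    have h1 : ((j.val : ℝ)) < m := by exact_mod_cast j.isLt
    have h2 : (0:ℝ) ≤ n := by positivity
    constructor
    · positivity
    · nlinarith [mul_le_mul_of_nonneg_right
        (show ((j.val : ℝ) + 1) ≤ (n:ℝ) + m + 1 by linarith) hε.le]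
  -- nonnegativity of d
  have hd_nonneg : ∀ p q, 0 ≤ d p q := by
    intro p q
    have h1 := hdtri p q p
    have h2 := hd0 p
    have h3 := hdsymm p q
    linarith
  -- lower bounds from the four potential functions
  have hfle : ∀ p q, |fX n m ε p - fX n m ε q| ≤ d p q :=
    hmax _ (absPM _) (fX_bounds hn hm)
  have hgle : ∀ p q, |gZ n m ε p - gZ n m ε q| ≤ d p q :=
    hmax _ (absPM _) (gZ_bounds hn hm)
  have hple : ∀ (i₀ : Fin n) p q, |phi n m T ε i₀ p - phi n m T ε i₀ q| ≤ d p q :=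
    fun i₀ => hmax _ (absPM _) (phi_bounds i₀ hn hm)
  have hsle : ∀ (j₀ : Fin m) p q, |psi n m T ε j₀ p - psi n m T ε j₀ q| ≤ d p q :=
    fun j₀ => hmax _ (absPM _) (psi_bounds j₀ hn hm)
  -- specific lower bounds
  have hfxb : ∀ j' : Fin m, 21.4 + ((j'.val : ℝ) + 1) * ε ≤ d GV.x (GV.b j') := by
    intro j'
    have h1 := hfle GV.x (GV.b j')
    have h2 := neg_le_abs (fX n m ε GV.x - fX n m ε (GV.b j'))
    simp only [fX] at h1 h2
    linarith
  have hfxy : (21.5:ℝ) ≤ d GV.x GV.y := by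
    have h1 := hfle GV.x GV.y
    have h2 := neg_le_abs (fX n m ε GV.x - fX n m ε GV.y)
    simp only [fX] at h1 h2
    linarith
  have hfxu : (22:ℝ) ≤ d GV.x GV.u := by
    have h1 := hfle GV.x GV.u
    have h2 := neg_le_abs (fX n m ε GV.x - fX n m ε GV.u)
    simp only [fX] at h1 h2
    linarith
  have hfxh : (22.4:ℝ) ≤ d GV.x GV.h := by
    have h1 := hfle GV.x GV.h
    have h2 := neg_le_abs (fX n m ε GV.x - fX n m ε GV.h)
    simp only [fX] at h1 h2
    linarith
  have hgzb : ∀ j' : Fin m, (2:ℝ) ≤ d GV.z (GV.b j') := by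
    intro j'
    have h1 := hgle GV.z (GV.b j')
    have h2 := neg_le_abs (gZ n m ε GV.z - gZ n m ε (GV.b j'))
    simp only [gZ] at h1 h2
    linarith
  have hpay : ∀ i : Fin n, (1.2:ℝ) ≤ d (GV.a i) GV.y := by
    intro i
    have h1 := hple i (GV.a i) GV.y
    have h2 := neg_le_abs (phi n m T ε i (GV.a i) - phi n m T ε i GV.y)
    simp only [phi, eq_self_iff_true, if_true] at h1 h2
    linarith
  have hpau : ∀ i : Fin n, (1.1:ℝ) ≤ d (GV.a i) GV.u := by
    intro i
    have h1 := hple i (GV.a i) GV.u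
    have h2 := neg_le_abs (phi n m T ε i (GV.a i) - phi n m T ε i GV.u)
    simp only [phi, eq_self_iff_true, if_true] at h1 h2
    linarith
  have hpah : ∀ i : Fin n, (1.2:ℝ) ≤ d (GV.a i) GV.h := by
    intro i
    have h1 := hple i (GV.a i) GV.h
    have h2 := neg_le_abs (phi n m T ε i (GV.a i) - phi n m T ε i GV.h)
    simp only [phi, eq_self_iff_true, if_true] at h1 h2
    linarith
  have hpab_in : ∀ (i : Fin n) (j' : Fin m), i ∈ T j' →
      1 + (((i.val : ℝ) + 1) + ((j'.val : ℝ) + 1)) * ε ≤ d (GV.a i) (GV.b j') := by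
    intro i j' hij'
    have h1 := hple i (GV.a i) (GV.b j')
    have h2 := neg_le_abs (phi n m T ε i (GV.a i) - phi n m T ε i (GV.b j'))
    simp only [phi, eq_self_iff_true, if_true, if_pos hij'] at h1 h2
    linarith
  have hpab_out : ∀ (i : Fin n) (j' : Fin m), i ∉ T j' →
      (1.2:ℝ) ≤ d (GV.a i) (GV.b j') := by
    intro i j' hij'
    have h1 := hple i (GV.a i) (GV.b j')
    have h2 := neg_le_abs (phi n m T ε i (GV.a i) - phi n m T ε i (GV.b j'))
    simp only [phi, eq_self_iff_true, if_true, if_neg hij'] at h1 h2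
    linarith
  have hsbb : ∀ j' j'' : Fin m, j' ≠ j'' → (1.5:ℝ) ≤ d (GV.b j') (GV.b j'') := by
    intro j' j'' hne
    have h1 := hsle j' (GV.b j') (GV.b j'')
    have h2 := neg_le_abs (psi n m T ε j' (GV.b j') - psi n m T ε j' (GV.b j''))
    simp only [psi, eq_self_iff_true, if_true, if_neg (Ne.symm hne)] at h1 h2
    linarith
  -- upper bound on d x (a i)
  have hxa : ∀ i : Fin n, d GV.x (GV.a i) ≤ 21 + ((i.val : ℝ) + 1) * ε := by
    intro i
    have h1 := hdtri GV.x GV.z (GV.a i)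
    have h2 := hza i
    linarith
  -- key: a i with i ∈ T j is in the safe set
  have key_ai : ∀ i : Fin n, i ∈ T j → ∀ r, d GV.x (GV.b j) < d GV.x r →
      d (GV.a i) (GV.b j) < d (GV.a i) r := by
    intro i hi r hr
    obtain ⟨hi1, hi2⟩ := hn i
    obtain ⟨hj1, hj2⟩ := hm j
    have hupper := hab i j hi
    have hlowxb := hfxb j
    cases r with
    | x =>
      exfalso
      rw [hd0 GV.x] at hr
      linarith
    | z => exfalso; linarith [hxz]
    | y => have := hpay i; linarith
    | u => have := hpau i; linarith
    | h => have := hpah i; linarith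
    | a i' => exfalso; have := hxa i'; obtain ⟨hi'1, hi'2⟩ := hn i'; linarith
    | b j' =>
      have hupb' := hxb j'
      have hjj' : (j.val : ℝ) < (j'.val : ℝ) := by
        by_contra hcon
        push_neg at hcon
        have : ((j'.val : ℝ) + 1) * ε ≤ ((j.val : ℝ) + 1) * ε :=
          mul_le_mul_of_nonneg_right (by linarith) hε.le
        linarith
      by_cases hij' : i ∈ T j'
      · have := hpab_in i j' hij'
        nlinarith
      · have := hpab_out i j' hij'
        obtain ⟨hj'1, hj'2⟩ := hm j'
        linarith
  -- the set equality
  have hSeq : iBGPSafeSet d GV.x (GV.b j) =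
      ({GV.x, GV.b j} : Set (GV n m)) ∪ {w | ∃ i ∈ T j, w = GV.a i} := by
    obtain ⟨hj1, hj2⟩ := hm j
    have hupb := hxb j
    have hlowxb := hfxb j
    have hyD : d GV.x (GV.b j) < d GV.x GV.y := by linarith
    have huD : d GV.x (GV.b j) < d GV.x GV.u := by linarith
    have hhD : d GV.x (GV.b j) < d GV.x GV.h := by linarith
    ext w
    simp only [iBGPSafeSet, Set.mem_union, Set.mem_setOf_eq, Set.mem_singleton_iff,
      Set.mem_insert_iff]
    constructor
    · rintro (hw | rfl)
      · cases w with
        | x => exact Or.inl (Or.inl rfl)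
        | z =>
          exfalso
          have := hw GV.y hyD
          have := hgzb j
          linarith [hzy]
        | y =>
          exfalso
          have := hw GV.y hyD
          rw [hd0 GV.y] at this
          linarith [hd_nonneg GV.y (GV.b j)]
        | u =>
          exfalso
          have := hw GV.u huD
          rw [hd0 GV.u] at this
          linarith [hd_nonneg GV.u (GV.b j)]
        | h =>
          exfalso
          have := hw GV.h hhD
          rw [hd0 GV.h] at this
          linarith [hd_nonneg GV.h (GV.b j)]
        | a i =>
          by_cases hi : i ∈ T j
          · exact Or.inr ⟨i, hi, rfl⟩
          · exfalso
            have h1 := hw GV.u huD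
            have h2 := hpab_out i j hi
            have h3 := hau i
            linarith
        | b j' =>
          by_cases hjj : j' = j
          · subst hjj; exact Or.inl (Or.inr rfl)
          · exfalso
            have h1 := hw GV.h hhD
            have h2 := hsbb j' j hjj
            have h3 := hbh j'
            obtain ⟨hj'1, hj'2⟩ := hm j'
            linarith
      · exact Or.inl (Or.inr rfl)
    · rintro ((rfl | rfl) | ⟨i, hi, rfl⟩)
      · exact Or.inl fun r hr => hr
      · exact Or.inr rfl
      · exact Or.inl (key_ai i hi)
  refine ⟨hSeq, fun E hE => ?_⟩
  obtain ⟨w, hsupp⟩ := hE GV.x (GV.b j)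
  have hne : (GV.b j : GV n m) ≠ GV.x := by nofun
  obtain ⟨v, hv, hadj⟩ := exists_adj_last w hne
  rw [SimpleGraph.fromEdgeSet_adj] at hadj
  obtain ⟨hmem, hvne⟩ := hadj
  have hvS := hsupp v hv
  rw [hSeq] at hvS
  simp only [Set.mem_union, Set.mem_setOf_eq, Set.mem_singleton_iff,
    Set.mem_insert_iff] at hvS
  rcases hvS with (rfl | rfl) | ⟨i, hi, rfl⟩
  · exact absurd rfl hvne
  · left; rwa [Sym2.eq_swap]
  · right; exact ⟨i, hi, by rwa [Sym2.eq_swap]⟩
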